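/- Galois Theorem (categorical form): Let C be a category with object A satisfying that every arrow is a strict epimorphism, every object admits an arrow from A, and Hom(A,-) preserves strict epimorphisms. Let x : A → X and y : A → Y be arrows with Fix(x) ⊆ Fix(y), where Fix(x) = {h ∈ Aut(A) | x∘h = x}. Then there exists a unique arrow f : X → Y with f∘x = y. -/

import Mathlib

open CategoryTheory

universe v u

/-- Grothendieck strict epimorphism. -/
def IsStrictEpi {C : Type u} [Category.{v} C] {X Y : C} (f : X ⟶ Y) : Prop :=
  ∀ {Z : C} (g : X ⟶ Z),
    (∀ {W : C} (s t : W ⟶ X), s ≫ f = t ≫ f → s ≫ g = t ≫ g) →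
    ∃! h : Y ⟶ Z, f ≫ h = g

lemma epi_of_isStrictEpi {C : Type u} [Category.{v} C] {X Y : C} (f : X ⟶ Y)
    (hf : IsStrictEpi f) : Epi f := by
  constructor
  intro Z g1 g2 eq
  obtain ⟨h, _, uniq⟩ := hf (f ≫ g1) (fun s t hst => by
    rw [← Category.assoc, ← Category.assoc, hst])
  exact (uniq g1 rfl).trans (uniq g2 eq.symm).symm

/-- Galois theorem (categorical form): if `Fix(x) ⊆ Fix(y)` then `y` factors
uniquely through `x`. -/
theorem stmt3 {C : Type u} [Category.{v} C] (A : C)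
    (h1 : ∀ {X Y : C} (f : X ⟶ Y), IsStrictEpi f)
    (h2 : ∀ X : C, Nonempty (A ⟶ X))
    (h3 : ∀ {X Y : C} (f : X ⟶ Y), IsStrictEpi f →
      IsStrictEpi (C := Type v) (X := A ⟶ X) (Y := A ⟶ Y) (TypeCat.ofHom (fun g : A ⟶ X => g ≫ f))) :
    ∀ (X Y : C) (x : A ⟶ X) (y : A ⟶ Y),
      (∀ h : A ≅ A, h.hom ≫ x = x → h.hom ≫ y = y) →
      ∃! f : X ⟶ Y, x ≫ f = y := by
  -- every endomorphism of A has a left inverse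
  have split : ∀ u : A ⟶ A, ∃ v : A ⟶ A, v ≫ u = 𝟙 A := by
    intro u
    have := epi_of_isStrictEpi (C := Type v) _ (h3 u (h1 u))
    have hsurj := (epi_iff_surjective (TypeCat.ofHom (fun g : A ⟶ A => g ≫ u))).mp this
    obtain ⟨v, hv⟩ := hsurj (𝟙 A)
    exact ⟨v, hv⟩
  -- every endomorphism of A is an isomorphism
  have endoIso : ∀ u : A ⟶ A, IsIso u := by
    intro u
    obtain ⟨v, hv⟩ := split u
    obtain ⟨w, hw⟩ := split v
    have : u = w := by
      calc u = (w ≫ v) ≫ u := by rw [hw, Category.id_comp]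
        _ = w ≫ (v ≫ u) := by rw [Category.assoc]
        _ = w := by rw [hv, Category.comp_id]
    exact ⟨v, by rw [this]; exact hw, hv⟩
  intro X Y x y hfix
  apply h1 x y
  intro W s t hst
  obtain ⟨a⟩ := h2 W
  set u := a ≫ s
  set vv := a ≫ t
  have hu : IsIso u := endoIso u
  have hvv : IsIso vv := endoIso vv
  have key : (inv vv ≫ u) ≫ x = x := by
    have : u ≫ x = vv ≫ x := by
      simp only [u, vv, Category.assoc, hst]
    rw [Category.assoc, this, ← Category.assoc, IsIso.inv_hom_id, Category.id_comp]
  have hy := hfix ((asIso vv).symm ≪≫ asIso u) (by simpa using key)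
  simp only [Iso.trans_hom, Iso.symm_hom, asIso_inv, asIso_hom, Category.assoc] at hy
  -- hy : inv vv ≫ u ≫ y = y
  have : u ≫ y = vv ≫ y := by
    conv_rhs => rw [← hy]
    rw [← Category.assoc, IsIso.hom_inv_id, Category.id_comp]
  have ha : a ≫ (s ≫ y) = a ≫ (t ≫ y) := by
    simpa only [u, vv, Category.assoc] using this
  have := epi_of_isStrictEpi a (h1 a)
  exact (cancel_epi a).mp ha
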